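/- Let U be a graph such that both U and its complement are claw-free, and let x be a vertex of U belonging to some 3-element independent set. Then any two distinct triangles of U containing x have no edge in common; that is, if T1 and T2 are triangles of U with x ∈ T1, x ∈ T2 and T1 ≠ T2, then T1 ∩ T2 = {x}. -/

import Mathlib

open SimpleGraph

/-- The claw `K_{1,3}`: vertex 0 joined to each of the pairwise
    nonadjacent vertices 1, 2, 3. -/
def claw : SimpleGraph (Fin 4) := SimpleGraph.fromRel (fun a _ => a = 0)

/-- A graph is claw-free if it has no induced subgraph isomorphic to `K_{1,3}`. -/
def ClawFree {V : Type*} (G : SimpleGraph V) : Prop := IsEmpty (claw ↪g G)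

/-- A claw-free graph has no vertex `c` adjacent to three pairwise
    nonadjacent vertices. -/
lemma no_claw {V : Type*} {G : SimpleGraph V} (h : ClawFree G) {c l1 l2 l3 : V}
    (a1 : G.Adj c l1) (a2 : G.Adj c l2) (a3 : G.Adj c l3)
    (n12 : ¬G.Adj l1 l2) (n13 : ¬G.Adj l1 l3) (n23 : ¬G.Adj l2 l3)
    (d12 : l1 ≠ l2) (d13 : l1 ≠ l3) (d23 : l2 ≠ l3) : False := by
  have hc1 : c ≠ l1 := a1.ne
  have hc2 : c ≠ l2 := a2.ne
  have hc3 : c ≠ l3 := a3.ne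
  refine h.elim ⟨⟨![c,l1,l2,l3], ?_⟩, ?_⟩
  · intro i j hij
    fin_cases i <;> fin_cases j <;> simp_all
  · intro i j; change G.Adj (![c,l1,l2,l3] i) (![c,l1,l2,l3] j) ↔ claw.Adj i j
    fin_cases i <;> fin_cases j <;>
      simp [claw, G.adj_comm, a1, a2, a3, n12, n13, n23, hc1, hc2, hc3, d12, d13, d23]

/-- If `Uᶜ` is claw-free, then no vertex `w` is nonadjacent (in `U`)
    to all three vertices of a triangle of `U`. -/
lemma no_compl_claw {V : Type*} {U : SimpleGraph V} (h2 : ClawFree Uᶜ) {w l1 l2 l3 : V}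
    (d1 : w ≠ l1) (d2 : w ≠ l2) (d3 : w ≠ l3)
    (n1 : ¬U.Adj w l1) (n2 : ¬U.Adj w l2) (n3 : ¬U.Adj w l3)
    (a12 : U.Adj l1 l2) (a13 : U.Adj l1 l3) (a23 : U.Adj l2 l3) : False := by
  refine no_claw h2 (c := w) (l1 := l1) (l2 := l2) (l3 := l3)
    ⟨d1, n1⟩ ⟨d2, n2⟩ ⟨d3, n3⟩ ?_ ?_ ?_ a12.ne a13.ne a23.ne <;>
    exact fun h => h.2 (by assumption)

/-- The combinatorial core: if `{x,a,b}` and `{x,a,d}` are triangles with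
    `b ≠ d` and `{x,y,z}` is an independent triple, we get a contradiction. -/
lemma core {V : Type*} {U : SimpleGraph V} (h1 : ClawFree U) (h2 : ClawFree Uᶜ)
    {x a b d y z : V}
    (Uxa : U.Adj x a) (Uxb : U.Adj x b) (Uab : U.Adj a b)
    (Uxd : U.Adj x d) (Uad : U.Adj a d) (hbd : b ≠ d)
    (nxy : ¬U.Adj x y) (nxz : ¬U.Adj x z) (nyz : ¬U.Adj y z)
    (hxy : x ≠ y) (hxz : x ≠ z) (hyz : y ≠ z) : False := by
  have hya : y ≠ a := fun h => nxy (h ▸ Uxa)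
  have hyb : y ≠ b := fun h => nxy (h ▸ Uxb)
  have hyd : y ≠ d := fun h => nxy (h ▸ Uxd)
  have hza : z ≠ a := fun h => nxz (h ▸ Uxa)
  have hzb : z ≠ b := fun h => nxz (h ▸ Uxb)
  have hzd : z ≠ d := fun h => nxz (h ▸ Uxd)
  have noCommon : ∀ v : V, U.Adj v x → U.Adj v y → U.Adj v z → False := by
    intro v h1' h2' h3'
    exact no_claw h1 h1' h2' h3' nxy nxz nyz hxy hxz hyz
  by_cases hBD : U.Adj b d
  · -- {x,a,b,d} is a K4; each of y, z is U-adjacent to at least 2 of a,b,d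
    have key : ∀ w : V, w ≠ x → w ≠ a → w ≠ b → w ≠ d → ¬U.Adj x w →
        (U.Adj w a ∧ U.Adj w b) ∨ (U.Adj w a ∧ U.Adj w d) ∨ (U.Adj w b ∧ U.Adj w d) := by
      intro w wx wa wb wd nxw
      have nwx : ¬U.Adj w x := fun h => nxw h.symm
      by_cases h1' : U.Adj w a
      · by_cases h2' : U.Adj w b
        · exact Or.inl ⟨h1', h2'⟩
        · by_cases h3' : U.Adj w d
          · exact Or.inr (Or.inl ⟨h1', h3'⟩)
          · exact absurd (no_compl_claw h2 wx wb wd nwx h2' h3' Uxb Uxd hBD) id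
      · by_cases h2' : U.Adj w b
        · by_cases h3' : U.Adj w d
          · exact Or.inr (Or.inr ⟨h2', h3'⟩)
          · exact absurd (no_compl_claw h2 wx wa wd nwx h1' h3' Uxa Uxd Uad) id
        · exact absurd (no_compl_claw h2 wx wa wb nwx h1' h2' Uxa Uxb Uab) id
    have y2 := key y hxy.symm hya hyb hyd nxy
    have z2 := key z hxz.symm hza hzb hzd nxz
    rcases y2 with ⟨ya, yb⟩ | ⟨ya, yd⟩ | ⟨yb, yd⟩ <;>
      rcases z2 with ⟨za, zb⟩ | ⟨za, zd⟩ | ⟨zb, zd⟩ <;>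
      first
      | exact noCommon a Uxa.symm ya.symm za.symm
      | exact noCommon b Uxb.symm yb.symm zb.symm
      | exact noCommon d Uxd.symm yd.symm zd.symm
  · -- b and d not adjacent
    have step1 : ∀ w : V, w ≠ x → w ≠ a → w ≠ b → w ≠ d → ¬U.Adj x w →
        ¬U.Adj w a → U.Adj w b ∧ U.Adj w d := by
      intro w wx wa wb wd nxw nwa
      have nwx : ¬U.Adj w x := fun h => nxw h.symm
      constructor
      · by_contra hn
        exact no_compl_claw h2 wx wa wb nwx nwa hn Uxa Uxb Uab
      · by_contra hn
        exact no_compl_claw h2 wx wa wd nwx nwa hn Uxa Uxd Uad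
    by_cases hyaAdj : U.Adj y a
    · have hzaN : ¬U.Adj z a := fun h => noCommon a Uxa.symm hyaAdj.symm h.symm
      obtain ⟨zb, zd⟩ := step1 z hxz.symm hza hzb hzd nxz hzaN
      have hybN : ¬U.Adj y b := fun h => noCommon b Uxb.symm h.symm zb.symm
      have hydN : ¬U.Adj y d := fun h => noCommon d Uxd.symm h.symm zd.symm
      exact no_claw h1 Uab Uad hyaAdj.symm hBD (fun h => hybN h.symm)
        (fun h => hydN h.symm) hbd hyb.symm hyd.symm
    · obtain ⟨yb, yd⟩ := step1 y hxy.symm hya hyb hyd nxy hyaAdj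
      have hzbN : ¬U.Adj z b := fun h => noCommon b Uxb.symm yb.symm h.symm
      have hzdN : ¬U.Adj z d := fun h => noCommon d Uxd.symm yd.symm h.symm
      have hzaAdj : U.Adj z a := by
        by_contra hn
        exact hzbN (step1 z hxz.symm hza hzb hzd nxz hn).1
      exact no_claw h1 Uab Uad hzaAdj.symm hBD (fun h => hzbN h.symm)
        (fun h => hzdN h.symm) hbd hzb.symm hzd.symm

/-- A 3-element set containing `x` is `{x, u, v}` for distinct `u`, `v`. -/
lemma three_with {V : Type*} {s : Set V} (h3 : s.ncard = 3) {x : V} (hx : x ∈ s) :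
    ∃ u v, u ≠ v ∧ x ≠ u ∧ x ≠ v ∧ s = {x, u, v} := by
  obtain ⟨p, q, r, hpq, hpr, hqr, rfl⟩ := Set.ncard_eq_three.mp h3
  simp only [Set.mem_insert_iff, Set.mem_singleton_iff] at hx
  rcases hx with rfl | rfl | rfl
  · exact ⟨q, r, hqr, hpq, hpr, rfl⟩
  · exact ⟨p, r, hpr, hpq.symm, hqr, by ext w; simp; tauto⟩
  · exact ⟨p, q, hpq, hpr.symm, hqr.symm, by ext w; simp; tauto⟩

/-- Let `U` and its complement be claw-free and let `x` belong to a 3-element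
    independent set. Then two distinct triangles of `U` containing `x` meet
    exactly in `x`. -/
theorem clawfree_triangles_no_common_edge {V : Type*} [Fintype V] (U : SimpleGraph V)
    (h1 : ClawFree U) (h2 : ClawFree Uᶜ)
    (x : V) (B : Set V) (hxB : x ∈ B) (hB3 : B.ncard = 3) (hB : Uᶜ.IsClique B)
    (T1 T2 : Set V) (hT1 : U.IsClique T1) (hT1c : T1.ncard = 3) (hxT1 : x ∈ T1)
    (hT2 : U.IsClique T2) (hT2c : T2.ncard = 3) (hxT2 : x ∈ T2)
    (hne : T1 ≠ T2) :
    T1 ∩ T2 = {x} := by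
  obtain ⟨y, z, hyz, hxy, hxz, hBeq⟩ := three_with hB3 hxB
  have hyB : y ∈ B := by rw [hBeq]; simp
  have hzB : z ∈ B := by rw [hBeq]; simp
  have nxy : ¬U.Adj x y := ((SimpleGraph.compl_adj U _ _).mp (hB hxB hyB hxy)).2
  have nxz : ¬U.Adj x z := ((SimpleGraph.compl_adj U _ _).mp (hB hxB hzB hxz)).2
  have nyz : ¬U.Adj y z := ((SimpleGraph.compl_adj U _ _).mp (hB hyB hzB hyz)).2
  obtain ⟨u, v, huv, hxu, hxv, hT1eq⟩ := three_with hT1c hxT1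
  obtain ⟨u', v', huv', hxu', hxv', hT2eq⟩ := three_with hT2c hxT2
  by_contra hgoal
  have hex : ∃ w ∈ T1 ∩ T2, w ≠ x := by
    by_contra h
    push_neg at h
    exact hgoal (Set.eq_singleton_iff_unique_mem.mpr ⟨⟨hxT1, hxT2⟩, h⟩)
  obtain ⟨w, ⟨hwT1, hwT2⟩, hwx⟩ := hex
  have hw1 : w = u ∨ w = v := by
    rw [hT1eq] at hwT1; simpa [hwx] using hwT1
  have hw2 : w = u' ∨ w = v' := by
    rw [hT2eq] at hwT2; simpa [hwx] using hwT2
  have H1 : ∃ bb, T1 = {x, w, bb} ∧ w ≠ bb ∧ x ≠ bb := by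
    rcases hw1 with rfl | rfl
    · exact ⟨v, hT1eq, huv, hxv⟩
    · exact ⟨u, by rw [hT1eq, Set.pair_comm u w], huv.symm, hxu⟩
  have H2 : ∃ dd, T2 = {x, w, dd} ∧ w ≠ dd ∧ x ≠ dd := by
    rcases hw2 with rfl | rfl
    · exact ⟨v', hT2eq, huv', hxv'⟩
    · exact ⟨u', by rw [hT2eq, Set.pair_comm u' w], huv'.symm, hxu'⟩
  obtain ⟨bb, hT1', hwb, hxb⟩ := H1
  obtain ⟨dd, hT2', hwd, hxd⟩ := H2
  have hbd : bb ≠ dd := by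
    rintro rfl
    exact hne (hT1'.trans hT2'.symm)
  have mw1 : w ∈ T1 := by rw [hT1']; simp
  have mb1 : bb ∈ T1 := by rw [hT1']; simp
  have mw2 : w ∈ T2 := by rw [hT2']; simp
  have md2 : dd ∈ T2 := by rw [hT2']; simp
  exact core h1 h2 (hT1 hxT1 mw1 (Ne.symm hwx)) (hT1 hxT1 mb1 hxb) (hT1 mw1 mb1 hwb)
    (hT2 hxT2 md2 hxd) (hT2 mw2 md2 hwd) hbd nxy nxz nyz hxy hxz hyz
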